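/- Let C ⊆ ℝ^d be nonempty closed convex, f : ℝ^d → ℝ convex, α > 0, v ∈ ℝ^d, and x ∈ C. If p := prox_{αf}(v) and x⁺ := P_C(p), then ‖x⁺ - x‖² ≤ ‖v - x‖² + 2α(f(x) - f(p)) - ‖v - p‖² - ‖p - x⁺‖². -/

import Mathlib

private lemma aux_le_zero (a b : ℝ) (h : ∀ t : ℝ, 0 < t → t ≤ 1 → a ≤ t * b) : a ≤ 0 := by
  rcases le_or_gt b 0 with hb | hb
  · have := h 1 one_pos le_rfl; linarith
  · have key : ∀ ε > 0, a ≤ 0 + ε := by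
      intro ε hε
      have ht1 : 0 < min 1 (ε / b) := lt_min one_pos (div_pos hε hb)
      have h1 := h _ ht1 (min_le_left _ _)
      have h2 : min 1 (ε / b) * b ≤ (ε / b) * b :=
        mul_le_mul_of_nonneg_right (min_le_right _ _) hb.le
      rw [div_mul_cancel₀ _ hb.ne'] at h2
      linarith
    linarith [le_of_forall_pos_le_add key]

/-- Basic proximal–projection inequality: with `p = prox_{αf}(v)` and `x⁺ = P_C(p)`, for `x ∈ C`,
`‖x⁺ - x‖² ≤ ‖v - x‖² + 2α(f x - f p) - ‖v - p‖² - ‖p - x⁺‖²`. -/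
theorem prox_projection_basic_inequality
    {d : ℕ} (C : Set (EuclideanSpace ℝ (Fin d)))
    (hCne : C.Nonempty) (hCcl : IsClosed C) (hCcv : Convex ℝ C)
    (f : EuclideanSpace ℝ (Fin d) → ℝ) (hf : ConvexOn ℝ Set.univ f)
    (α : ℝ) (hα : 0 < α) (v x p xplus : EuclideanSpace ℝ (Fin d))
    (hx : x ∈ C)
    (hp : ∀ y, α * f p + (1 / 2) * ‖v - p‖ ^ 2 ≤ α * f y + (1 / 2) * ‖v - y‖ ^ 2)
    (hproj : xplus ∈ C ∧ ∀ y ∈ C, ‖p - xplus‖ ≤ ‖p - y‖) :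
    ‖xplus - x‖ ^ 2 ≤
      ‖v - x‖ ^ 2 + 2 * α * (f x - f p) - ‖v - p‖ ^ 2 - ‖p - xplus‖ ^ 2 := by
  obtain ⟨hxpC, hmin⟩ := hproj
  -- Step 1: ⟪v - p, x - p⟫ ≤ α (f x - f p)
  have h1 : inner ℝ (v - p) (x - p) - α * (f x - f p) ≤ 0 := by
    apply aux_le_zero _ ((1/2) * ‖x - p‖ ^ 2)
    intro t ht0 ht1
    have hy := hp (p + t • (x - p))
    have hconv : f (p + t • (x - p)) ≤ (1 - t) * f p + t * f x := by
      have := hf.2 (Set.mem_univ p) (Set.mem_univ x) (by linarith : (0:ℝ) ≤ 1 - t)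
        ht0.le (by ring)
      have heq : (1 - t) • p + t • x = p + t • (x - p) := by
        rw [smul_sub, sub_smul, one_smul]; abel
      rwa [heq] at this
    have hnorm : ‖v - (p + t • (x - p))‖ ^ 2
        = ‖v - p‖ ^ 2 - 2 * t * inner ℝ (v - p) (x - p) + t ^ 2 * ‖x - p‖ ^ 2 := by
      have heq : v - (p + t • (x - p)) = (v - p) - t • (x - p) := by abel
      rw [heq, @norm_sub_sq_real, real_inner_smul_right, norm_smul, mul_pow]
      simp [Real.norm_eq_abs, sq_abs]
      ring
    rw [hnorm] at hy
    have key : t * (inner ℝ (v - p) (x - p) - α * (f x - f p))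
        ≤ t * (t * ((1/2) * ‖x - p‖ ^ 2)) := by nlinarith [hα, hy, hconv]
    have := le_of_mul_le_mul_left key ht0
    linarith
  -- Step 2: ⟪p - xplus, x - xplus⟫ ≤ 0
  have h2 : (inner ℝ (p - xplus) (x - xplus) : ℝ) ≤ 0 := by
    have := aux_le_zero (inner ℝ (p - xplus) (x - xplus)) ((1/2) * ‖x - xplus‖ ^ 2) ?_
    · linarith
    intro t ht0 ht1
    have hyC : xplus + t • (x - xplus) ∈ C := by
      have := hCcv hxpC hx (by linarith : (0:ℝ) ≤ 1 - t) ht0.le (by ring)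
      have heq : (1 - t) • xplus + t • x = xplus + t • (x - xplus) := by
        rw [smul_sub, sub_smul, one_smul]; abel
      rwa [heq] at this
    have hy := hmin _ hyC
    have hy2 : ‖p - xplus‖ ^ 2 ≤ ‖p - (xplus + t • (x - xplus))‖ ^ 2 :=
      pow_le_pow_left₀ (norm_nonneg _) hy 2
    have hnorm : ‖p - (xplus + t • (x - xplus))‖ ^ 2
        = ‖p - xplus‖ ^ 2 - 2 * t * inner ℝ (p - xplus) (x - xplus) + t ^ 2 * ‖x - xplus‖ ^ 2 := by
      have heq : p - (xplus + t • (x - xplus)) = (p - xplus) - t • (x - xplus) := by abel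
      rw [heq, @norm_sub_sq_real, real_inner_smul_right, norm_smul, mul_pow]
      simp [Real.norm_eq_abs, sq_abs]
      ring
    rw [hnorm] at hy2
    have key : t * (inner ℝ (p - xplus) (x - xplus))
        ≤ t * (t * ((1/2) * ‖x - xplus‖ ^ 2)) := by nlinarith
    have := le_of_mul_le_mul_left key ht0
    linarith
  -- Step 3: combine
  have e1 : ‖v - x‖ ^ 2 = ‖v - p‖ ^ 2 - 2 * inner ℝ (v - p) (x - p) + ‖x - p‖ ^ 2 := by
    have heq : v - x = (v - p) - (x - p) := by abel
    rw [heq, @norm_sub_sq_real]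
  have e2 : ‖p - x‖ ^ 2 = ‖p - xplus‖ ^ 2 - 2 * inner ℝ (p - xplus) (x - xplus)
      + ‖x - xplus‖ ^ 2 := by
    have heq : p - x = (p - xplus) - (x - xplus) := by abel
    rw [heq, @norm_sub_sq_real]
  have e3 : ‖x - p‖ = ‖p - x‖ := norm_sub_rev _ _
  have e4 : ‖xplus - x‖ = ‖x - xplus‖ := norm_sub_rev _ _
  rw [e4]
  rw [e3] at e1
  nlinarith [h1, h2, e1, e2]
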